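/- Let (V,⟨·,·⟩) be a real inner product space of dimension n ≥ 4 and let R be an algebraic curvature tensor on V having n-nonnegative curvature operator of the second kind. Then the scalar curvature S of R is nonnegative, and Ric(v,v) ≥ S/(n(n+1)) for every unit vector v ∈ V. -/

import Mathlib

open scoped RealInnerProductSpace

variable {V : Type*} [NormedAddCommGroup V] [InnerProductSpace ℝ V]

/-- `R` is an algebraic curvature tensor: antisymmetric in the first two slots,
symmetric under exchange of the first and second pairs, and satisfying the
first Bianchi identity. -/
def IsAlgCurvatureTensor (R : V →ₗ[ℝ] V →ₗ[ℝ] V →ₗ[ℝ] V →ₗ[ℝ] ℝ) : Prop :=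
  (∀ x y z w : V, R x y z w = - R y x z w) ∧
  (∀ x y z w : V, R x y z w = R z w x y) ∧
  (∀ x y z w : V, R x y z w + R y z x w + R z x y w = 0)

/-- The Ricci curvature `Ric(x,y) = Σ_j R(x,e_j,y,e_j)` with respect to an
orthonormal basis. -/
noncomputable def ricci {n : ℕ} (b : OrthonormalBasis (Fin n) ℝ V)
    (R : V →ₗ[ℝ] V →ₗ[ℝ] V →ₗ[ℝ] V →ₗ[ℝ] ℝ) (x y : V) : ℝ :=
  ∑ j, R x (b j) y (b j)

/-- The scalar curvature `S = Σ_{i,j} R_{ijij}`. -/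
noncomputable def scalarCurv {n : ℕ} (b : OrthonormalBasis (Fin n) ℝ V)
    (R : V →ₗ[ℝ] V →ₗ[ℝ] V →ₗ[ℝ] V →ₗ[ℝ] ℝ) : ℝ :=
  ∑ i, ∑ j, R (b i) (b j) (b i) (b j)

/-- `φ` is a symmetric bilinear form which is traceless with respect to the
orthonormal basis `b`. -/
def IsTracelessSymForm {n : ℕ} (b : OrthonormalBasis (Fin n) ℝ V)
    (φ : V →ₗ[ℝ] V →ₗ[ℝ] ℝ) : Prop :=
  (∀ x y : V, φ x y = φ y x) ∧ (∑ i, φ (b i) (b i) = 0)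

/-- The inner product `⟨φ,ψ⟩ = Σ_{i,j} φ(e_i,e_j) ψ(e_i,e_j)` of bilinear forms. -/
noncomputable def formInner {n : ℕ} (b : OrthonormalBasis (Fin n) ℝ V)
    (φ ψ : V →ₗ[ℝ] V →ₗ[ℝ] ℝ) : ℝ :=
  ∑ i, ∑ j, φ (b i) (b j) * ψ (b i) (b j)

/-- The curvature operator of the second kind
`R̊(φ,ψ) = Σ_{i,j,k,l} R_{ijkl} φ(e_i,e_l) ψ(e_j,e_k)`. -/
noncomputable def secondKind {n : ℕ} (b : OrthonormalBasis (Fin n) ℝ V)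
    (R : V →ₗ[ℝ] V →ₗ[ℝ] V →ₗ[ℝ] V →ₗ[ℝ] ℝ)
    (φ ψ : V →ₗ[ℝ] V →ₗ[ℝ] ℝ) : ℝ :=
  ∑ i, ∑ j, ∑ k, ∑ l,
    R (b i) (b j) (b k) (b l) * φ (b i) (b l) * ψ (b j) (b k)

/-- `R` has `k`-nonnegative curvature operator of the second kind:
`Σ_{a=1}^k R̊(φ_a,φ_a) ≥ 0` for every orthonormal `k`-tuple of traceless
symmetric bilinear forms. -/
def kNonnegSecondKind {n : ℕ} (b : OrthonormalBasis (Fin n) ℝ V)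
    (R : V →ₗ[ℝ] V →ₗ[ℝ] V →ₗ[ℝ] V →ₗ[ℝ] ℝ) (k : ℕ) : Prop :=
  ∀ φ : Fin k → (V →ₗ[ℝ] V →ₗ[ℝ] ℝ),
    (∀ a, IsTracelessSymForm b (φ a)) →
    (∀ a a', formInner b (φ a) (φ a') = if a = a' then 1 else 0) →
    0 ≤ ∑ a, secondKind b R (φ a) (φ a)

/-- `R` has `k`-positive curvature operator of the second kind:
`Σ_{a=1}^k R̊(φ_a,φ_a) > 0` for every orthonormal `k`-tuple of traceless
symmetric bilinear forms. -/
def kPosSecondKind {n : ℕ} (b : OrthonormalBasis (Fin n) ℝ V)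
    (R : V →ₗ[ℝ] V →ₗ[ℝ] V →ₗ[ℝ] V →ₗ[ℝ] ℝ) (k : ℕ) : Prop :=
  ∀ φ : Fin k → (V →ₗ[ℝ] V →ₗ[ℝ] ℝ),
    (∀ a, IsTracelessSymForm b (φ a)) →
    (∀ a a', formInner b (φ a) (φ a') = if a = a' then 1 else 0) →
    0 < ∑ a, secondKind b R (φ a) (φ a)

noncomputable def tform (u w : V) : V →ₗ[ℝ] V →ₗ[ℝ] ℝ :=
  LinearMap.mk₂ ℝ (fun x y => ⟪u, x⟫ * ⟪w, y⟫)
    (fun x x' y => by simp only [inner_add_right]; ring)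
    (fun c x y => by simp only [real_inner_smul_right, smul_eq_mul]; ring)
    (fun x y y' => by simp only [inner_add_right]; ring)
    (fun c x y => by simp only [real_inner_smul_right, smul_eq_mul]; ring)

@[simp] lemma tform_apply (u w x y : V) : tform u w x y = ⟪u, x⟫ * ⟪w, y⟫ := rfl

noncomputable def gform : V →ₗ[ℝ] V →ₗ[ℝ] ℝ := innerₗ V

@[simp] lemma gform_apply (x y : V) : (gform : V →ₗ[ℝ] V →ₗ[ℝ] ℝ) x y = ⟪x, y⟫ := rfl

variable {n : ℕ}

lemma parseval (b : OrthonormalBasis (Fin n) ℝ V) (u w : V) :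
    ∑ i, ⟪u, b i⟫ * ⟪w, b i⟫ = ⟪u, w⟫ := by
  rw [← b.sum_inner_mul_inner u w]
  exact Finset.sum_congr rfl fun i _ => by rw [real_inner_comm w (b i)]

lemma collapse (b : OrthonormalBasis (Fin n) ℝ V) (f : V →ₗ[ℝ] ℝ) (u : V) :
    ∑ i, ⟪u, b i⟫ * f (b i) = f u := by
  conv_rhs => rw [← b.sum_repr' u]
  rw [map_sum]
  exact Finset.sum_congr rfl fun i _ => by
    rw [map_smul, smul_eq_mul, real_inner_comm]

lemma b_inner (b : OrthonormalBasis (Fin n) ℝ V) (i j : Fin n) :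
    ⟪b i, b j⟫ = if i = j then (1:ℝ) else 0 :=
  orthonormal_iff_ite.mp b.orthonormal i j

lemma trace_inv (b e : OrthonormalBasis (Fin n) ℝ V) (B : V →ₗ[ℝ] V →ₗ[ℝ] ℝ) :
    ∑ i, B (b i) (b i) = ∑ i, B (e i) (e i) := by
  have h1 : ∀ i, B (b i) (b i) = ∑ j, ⟪b i, e j⟫ * B (b i) (e j) :=
    fun i => (collapse e (B (b i)) (b i)).symm
  calc ∑ i, B (b i) (b i) = ∑ i, ∑ j, ⟪b i, e j⟫ * B (b i) (e j) :=
        Finset.sum_congr rfl fun i _ => h1 i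
    _ = ∑ j, ∑ i, ⟪e j, b i⟫ * (B.flip (e j)) (b i) := by
        rw [Finset.sum_comm]
        exact Finset.sum_congr rfl fun j _ => Finset.sum_congr rfl fun i _ => by
          rw [real_inner_comm, LinearMap.flip_apply]
    _ = ∑ j, B (e j) (e j) :=
        Finset.sum_congr rfl fun j _ => by rw [collapse b (B.flip (e j)) (e j), LinearMap.flip_apply]

noncomputable def ev1 (R : V →ₗ[ℝ] V →ₗ[ℝ] V →ₗ[ℝ] V →ₗ[ℝ] ℝ) (y z w : V) : V →ₗ[ℝ] ℝ :=
  (LinearMap.applyₗ w).comp ((LinearMap.applyₗ z).comp ((LinearMap.applyₗ y).comp R))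

@[simp] lemma ev1_apply (R : V →ₗ[ℝ] V →ₗ[ℝ] V →ₗ[ℝ] V →ₗ[ℝ] ℝ) (y z w x : V) :
    ev1 R y z w x = R x y z w := rfl

noncomputable def ev2 (R : V →ₗ[ℝ] V →ₗ[ℝ] V →ₗ[ℝ] V →ₗ[ℝ] ℝ) (x z w : V) : V →ₗ[ℝ] ℝ :=
  (LinearMap.applyₗ w).comp ((LinearMap.applyₗ z).comp (R x))

@[simp] lemma ev2_apply (R : V →ₗ[ℝ] V →ₗ[ℝ] V →ₗ[ℝ] V →ₗ[ℝ] ℝ) (x z w y : V) :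
    ev2 R x z w y = R x y z w := rfl

noncomputable def ev3 (R : V →ₗ[ℝ] V →ₗ[ℝ] V →ₗ[ℝ] V →ₗ[ℝ] ℝ) (x y w : V) : V →ₗ[ℝ] ℝ :=
  (LinearMap.applyₗ w).comp (R x y)

@[simp] lemma ev3_apply (R : V →ₗ[ℝ] V →ₗ[ℝ] V →ₗ[ℝ] V →ₗ[ℝ] ℝ) (x y w z : V) :
    ev3 R x y w z = R x y z w := rfl

section computations
variable (b : OrthonormalBasis (Fin n) ℝ V) (R : V →ₗ[ℝ] V →ₗ[ℝ] V →ₗ[ℝ] V →ₗ[ℝ] ℝ)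

lemma fi_tt (u w u' w' : V) :
    formInner b (tform u w) (tform u' w') = ⟪u, u'⟫ * ⟪w, w'⟫ := by
  have h1 : ∀ i : Fin n, ∑ j, tform u w (b i) (b j) * tform u' w' (b i) (b j)
      = (⟪u, b i⟫ * ⟪u', b i⟫) * ⟪w, w'⟫ := by
    intro i
    rw [← parseval b w w', Finset.mul_sum]
    exact Finset.sum_congr rfl fun j _ => by simp only [tform_apply]; ring
  have h2 : formInner b (tform u w) (tform u' w')
      = ∑ i, (⟪u, b i⟫ * ⟪u', b i⟫) * ⟪w, w'⟫ :=
    Finset.sum_congr rfl fun i _ => h1 i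
  rw [h2, ← Finset.sum_mul, parseval]

lemma fi_gt (u w : V) : formInner b gform (tform u w) = ⟪u, w⟫ := by
  have h : ∀ i j : Fin n, gform (b i) (b j) * tform u w (b i) (b j)
      = if i = j then ⟪u, b i⟫ * ⟪w, b j⟫ else 0 := fun i j => by
    simp only [gform_apply, tform_apply, b_inner b]
    split <;> simp
  simp only [formInner, h, Finset.sum_ite_eq, Finset.mem_univ, if_true]
  exact parseval b u w

lemma fi_tg (u w : V) : formInner b (tform u w) gform = ⟪u, w⟫ := by
  have h : ∀ i j : Fin n, tform u w (b i) (b j) * gform (b i) (b j)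
      = if i = j then ⟪u, b i⟫ * ⟪w, b j⟫ else 0 := fun i j => by
    simp only [gform_apply, tform_apply, b_inner b]
    split <;> simp
  simp only [formInner, h, Finset.sum_ite_eq, Finset.mem_univ, if_true]
  exact parseval b u w

lemma fi_gg : formInner b (gform : V →ₗ[ℝ] V →ₗ[ℝ] ℝ) gform = (n : ℝ) := by
  have h : ∀ i j : Fin n, gform (b i) (b j) * gform (b i) (b j)
      = if i = j then (1:ℝ) else 0 := fun i j => by
    simp only [gform_apply, b_inner b]
    split <;> simp
  calc formInner b (gform : V →ₗ[ℝ] V →ₗ[ℝ] ℝ) gform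
      = ∑ i, ∑ j : Fin n, (if i = j then (1:ℝ) else 0) :=
        Finset.sum_congr rfl fun i _ => Finset.sum_congr rfl fun j _ => h i j
    _ = (n : ℝ) := by simp [Finset.sum_ite_eq]

lemma fi_add_left (φ φ' ψ : V →ₗ[ℝ] V →ₗ[ℝ] ℝ) :
    formInner b (φ + φ') ψ = formInner b φ ψ + formInner b φ' ψ := by
  simp only [formInner, LinearMap.add_apply, ← Finset.sum_add_distrib]
  exact Finset.sum_congr rfl fun i _ => Finset.sum_congr rfl fun j _ => by ring

lemma fi_add_right (φ ψ ψ' : V →ₗ[ℝ] V →ₗ[ℝ] ℝ) :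
    formInner b φ (ψ + ψ') = formInner b φ ψ + formInner b φ ψ' := by
  simp only [formInner, LinearMap.add_apply, ← Finset.sum_add_distrib]
  exact Finset.sum_congr rfl fun i _ => Finset.sum_congr rfl fun j _ => by ring

lemma fi_smul_left (r : ℝ) (φ ψ : V →ₗ[ℝ] V →ₗ[ℝ] ℝ) :
    formInner b (r • φ) ψ = r * formInner b φ ψ := by
  simp only [formInner, LinearMap.smul_apply, smul_eq_mul, Finset.mul_sum]
  exact Finset.sum_congr rfl fun i _ => Finset.sum_congr rfl fun j _ => by ring

lemma fi_smul_right (r : ℝ) (φ ψ : V →ₗ[ℝ] V →ₗ[ℝ] ℝ) :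
    formInner b φ (r • ψ) = r * formInner b φ ψ := by
  simp only [formInner, LinearMap.smul_apply, smul_eq_mul, Finset.mul_sum]
  exact Finset.sum_congr rfl fun i _ => Finset.sum_congr rfl fun j _ => by ring

lemma sk_add_left (φ φ' ψ : V →ₗ[ℝ] V →ₗ[ℝ] ℝ) :
    secondKind b R (φ + φ') ψ = secondKind b R φ ψ + secondKind b R φ' ψ := by
  simp only [secondKind, LinearMap.add_apply, ← Finset.sum_add_distrib]
  exact Finset.sum_congr rfl fun i _ => Finset.sum_congr rfl fun j _ =>
    Finset.sum_congr rfl fun k _ => Finset.sum_congr rfl fun l _ => by ring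

lemma sk_add_right (φ ψ ψ' : V →ₗ[ℝ] V →ₗ[ℝ] ℝ) :
    secondKind b R φ (ψ + ψ') = secondKind b R φ ψ + secondKind b R φ ψ' := by
  simp only [secondKind, LinearMap.add_apply, ← Finset.sum_add_distrib]
  exact Finset.sum_congr rfl fun i _ => Finset.sum_congr rfl fun j _ =>
    Finset.sum_congr rfl fun k _ => Finset.sum_congr rfl fun l _ => by ring

lemma sk_smul_left (r : ℝ) (φ ψ : V →ₗ[ℝ] V →ₗ[ℝ] ℝ) :
    secondKind b R (r • φ) ψ = r * secondKind b R φ ψ := by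
  simp only [secondKind, LinearMap.smul_apply, smul_eq_mul, Finset.mul_sum]
  exact Finset.sum_congr rfl fun i _ => Finset.sum_congr rfl fun j _ =>
    Finset.sum_congr rfl fun k _ => Finset.sum_congr rfl fun l _ => by ring

lemma sk_smul_right (r : ℝ) (φ ψ : V →ₗ[ℝ] V →ₗ[ℝ] ℝ) :
    secondKind b R φ (r • ψ) = r * secondKind b R φ ψ := by
  simp only [secondKind, LinearMap.smul_apply, smul_eq_mul, Finset.mul_sum]
  exact Finset.sum_congr rfl fun i _ => Finset.sum_congr rfl fun j _ =>
    Finset.sum_congr rfl fun k _ => Finset.sum_congr rfl fun l _ => by ring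

lemma sk_tt (u1 w1 u2 w2 : V) :
    secondKind b R (tform u1 w1) (tform u2 w2) = R u1 u2 w2 w1 := by
  have h1 : ∀ i j k : Fin n,
      ∑ l, R (b i) (b j) (b k) (b l) * tform u1 w1 (b i) (b l) * tform u2 w2 (b j) (b k)
      = (⟪u1, b i⟫ * (⟪u2, b j⟫ * ⟪w2, b k⟫)) * R (b i) (b j) (b k) w1 := by
    intro i j k
    rw [← collapse b (R (b i) (b j) (b k)) w1, Finset.mul_sum]
    exact Finset.sum_congr rfl fun l _ => by simp only [tform_apply]; ring
  have h2 : ∀ i j : Fin n,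
      ∑ k, (⟪u1, b i⟫ * (⟪u2, b j⟫ * ⟪w2, b k⟫)) * R (b i) (b j) (b k) w1
      = (⟪u1, b i⟫ * ⟪u2, b j⟫) * R (b i) (b j) w2 w1 := by
    intro i j
    rw [show R (b i) (b j) w2 w1 = ev3 R (b i) (b j) w1 w2 from rfl,
      ← collapse b (ev3 R (b i) (b j) w1) w2, Finset.mul_sum]
    exact Finset.sum_congr rfl fun k _ => by simp only [ev3_apply]; ring
  have h3 : ∀ i : Fin n,
      ∑ j, (⟪u1, b i⟫ * ⟪u2, b j⟫) * R (b i) (b j) w2 w1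
      = ⟪u1, b i⟫ * R (b i) u2 w2 w1 := by
    intro i
    rw [show R (b i) u2 w2 w1 = ev2 R (b i) w2 w1 u2 from rfl,
      ← collapse b (ev2 R (b i) w2 w1) u2, Finset.mul_sum]
    exact Finset.sum_congr rfl fun j _ => by simp only [ev2_apply]; ring
  calc secondKind b R (tform u1 w1) (tform u2 w2)
      = ∑ i, ∑ j, ∑ k, (⟪u1, b i⟫ * (⟪u2, b j⟫ * ⟪w2, b k⟫)) * R (b i) (b j) (b k) w1 :=
        Finset.sum_congr rfl fun i _ => Finset.sum_congr rfl fun j _ =>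
          Finset.sum_congr rfl fun k _ => h1 i j k
    _ = ∑ i, ∑ j, (⟪u1, b i⟫ * ⟪u2, b j⟫) * R (b i) (b j) w2 w1 :=
        Finset.sum_congr rfl fun i _ => Finset.sum_congr rfl fun j _ => h2 i j
    _ = ∑ i, ⟪u1, b i⟫ * R (b i) u2 w2 w1 :=
        Finset.sum_congr rfl fun i _ => h3 i
    _ = R u1 u2 w2 w1 := by
        rw [show R u1 u2 w2 w1 = ev1 R u2 w2 w1 u1 from rfl, ← collapse b (ev1 R u2 w2 w1) u1]
        exact Finset.sum_congr rfl fun i _ => by rw [ev1_apply]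

end computations

section gcomp
variable (b : OrthonormalBasis (Fin n) ℝ V) (R : V →ₗ[ℝ] V →ₗ[ℝ] V →ₗ[ℝ] V →ₗ[ℝ] ℝ)

lemma sk_gg : secondKind b R gform gform = ∑ i, ∑ j, R (b i) (b j) (b j) (b i) := by
  have h : ∀ i j k l : Fin n,
      R (b i) (b j) (b k) (b l) * gform (b i) (b l) * gform (b j) (b k)
      = if i = l then (if j = k then R (b i) (b j) (b k) (b l) else 0) else 0 := by
    intro i j k l
    simp only [gform_apply, b_inner b]
    split <;> split <;> simp
  calc secondKind b R gform gform
      = ∑ i, ∑ j, ∑ k, ∑ l : Fin n,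
          (if i = l then (if j = k then R (b i) (b j) (b k) (b l) else 0) else 0) :=
        Finset.sum_congr rfl fun i _ => Finset.sum_congr rfl fun j _ =>
          Finset.sum_congr rfl fun k _ => Finset.sum_congr rfl fun l _ => h i j k l
    _ = ∑ i, ∑ j, R (b i) (b j) (b j) (b i) := by
        simp [Finset.sum_ite_eq]

lemma sk_gt (u w : V) : secondKind b R gform (tform u w) = ∑ i, R (b i) u w (b i) := by
  have h : ∀ i j k l : Fin n,
      R (b i) (b j) (b k) (b l) * gform (b i) (b l) * tform u w (b j) (b k)
      = if i = l then R (b i) (b j) (b k) (b l) * (⟪u, b j⟫ * ⟪w, b k⟫) else 0 := by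
    intro i j k l
    simp only [gform_apply, tform_apply, b_inner b]
    split
    · ring
    · simp
  calc secondKind b R gform (tform u w)
      = ∑ i, ∑ j, ∑ k, ∑ l : Fin n,
          (if i = l then R (b i) (b j) (b k) (b l) * (⟪u, b j⟫ * ⟪w, b k⟫) else 0) :=
        Finset.sum_congr rfl fun i _ => Finset.sum_congr rfl fun j _ =>
          Finset.sum_congr rfl fun k _ => Finset.sum_congr rfl fun l _ => h i j k l
    _ = ∑ i, ∑ j, ∑ k : Fin n, R (b i) (b j) (b k) (b i) * (⟪u, b j⟫ * ⟪w, b k⟫) := by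
        simp [Finset.sum_ite_eq]
    _ = ∑ i, ∑ j : Fin n, ⟪u, b j⟫ * R (b i) (b j) w (b i) := by
        refine Finset.sum_congr rfl fun i _ => Finset.sum_congr rfl fun j _ => ?_
        rw [show R (b i) (b j) w (b i) = ev3 R (b i) (b j) (b i) w from rfl,
          ← collapse b (ev3 R (b i) (b j) (b i)) w, Finset.mul_sum]
        exact Finset.sum_congr rfl fun k _ => by rw [ev3_apply]; ring
    _ = ∑ i, R (b i) u w (b i) := by
        refine Finset.sum_congr rfl fun i _ => ?_
        rw [show R (b i) u w (b i) = ev2 R (b i) w (b i) u from rfl,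
          ← collapse b (ev2 R (b i) w (b i)) u]
        exact Finset.sum_congr rfl fun j _ => by rw [ev2_apply]

lemma sk_tg (u w : V) : secondKind b R (tform u w) gform = ∑ j, R u (b j) (b j) w := by
  have h1 : ∀ i j k : Fin n,
      ∑ l, R (b i) (b j) (b k) (b l) * tform u w (b i) (b l) * gform (b j) (b k)
      = if j = k then ⟪u, b i⟫ * R (b i) (b j) (b k) w else 0 := by
    intro i j k
    by_cases hjk : j = k
    · rw [if_pos hjk]
      rw [show R (b i) (b j) (b k) w = R (b i) (b j) (b k) w from rfl,
        ← collapse b (R (b i) (b j) (b k)) w, Finset.mul_sum]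
      refine Finset.sum_congr rfl fun l _ => ?_
      simp only [tform_apply, gform_apply, b_inner b, if_pos hjk]
      ring
    · rw [if_neg hjk]
      refine Finset.sum_eq_zero fun l _ => ?_
      simp [tform_apply, gform_apply, b_inner b, hjk]
  calc secondKind b R (tform u w) gform
      = ∑ i, ∑ j, ∑ k : Fin n, (if j = k then ⟪u, b i⟫ * R (b i) (b j) (b k) w else 0) :=
        Finset.sum_congr rfl fun i _ => Finset.sum_congr rfl fun j _ =>
          Finset.sum_congr rfl fun k _ => h1 i j k
    _ = ∑ i, ∑ j : Fin n, ⟪u, b i⟫ * R (b i) (b j) (b j) w := by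
        simp [Finset.sum_ite_eq]
    _ = ∑ j, ∑ i : Fin n, ⟪u, b i⟫ * R (b i) (b j) (b j) w := Finset.sum_comm
    _ = ∑ j, R u (b j) (b j) w := by
        refine Finset.sum_congr rfl fun j _ => ?_
        rw [show R u (b j) (b j) w = ev1 R (b j) (b j) w u from rfl,
          ← collapse b (ev1 R (b j) (b j) w) u]
        exact Finset.sum_congr rfl fun i _ => by rw [ev1_apply]

end gcomp
noncomputable def bform (R : V →ₗ[ℝ] V →ₗ[ℝ] V →ₗ[ℝ] V →ₗ[ℝ] ℝ) (v : V) :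
    V →ₗ[ℝ] V →ₗ[ℝ] ℝ :=
  LinearMap.mk₂ ℝ (fun x y => R v x v y)
    (fun x x' y => by simp [map_add, LinearMap.add_apply])
    (fun c x y => by simp [map_smul, LinearMap.smul_apply])
    (fun x y y' => by simp [map_add])
    (fun c x y => by simp [map_smul])

@[simp] lemma bform_apply (R : V →ₗ[ℝ] V →ₗ[ℝ] V →ₗ[ℝ] V →ₗ[ℝ] ℝ) (v x y : V) :
    bform R v x y = R v x v y := rfl

section symms
variable {R : V →ₗ[ℝ] V →ₗ[ℝ] V →ₗ[ℝ] V →ₗ[ℝ] ℝ} (hR : IsAlgCurvatureTensor R)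
include hR

lemma zero_xx (x z w : V) : R x x z w = 0 := by
  have := hR.1 x x z w; linarith

lemma asym2 (x y z w : V) : R x y z w = - R x y w z := by
  rw [hR.2.1 x y z w, hR.1 z w x y, hR.2.1 w z x y]

lemma flip2 (x y z w : V) : R x y z w = R y x w z := by
  rw [hR.1 x y z w, asym2 hR y x z w, neg_neg]

lemma zero_zz (x y z : V) : R x y z z = 0 := by
  have h := asym2 hR x y z z; linarith

end symms

set_option maxHeartbeats 2000000 in
lemma key {n : ℕ} (hn : 4 ≤ n) (b : OrthonormalBasis (Fin n) ℝ V)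
    (R : V →ₗ[ℝ] V →ₗ[ℝ] V →ₗ[ℝ] V →ₗ[ℝ] ℝ)
    (hR : IsAlgCurvatureTensor R) (hnn : kNonnegSecondKind b R n)
    (v : V) (hv : ‖v‖ = 1) :
    scalarCurv b R ≤ (n : ℝ) * ((n : ℝ) + 1) * ricci b R v v := by
  haveI : FiniteDimensional ℝ V := Module.Finite.of_basis b.toBasis
  have hvv : ⟪v, v⟫ = 1 := by
    rw [real_inner_self_eq_norm_mul_norm, hv]; norm_num
  have hn0 : 0 < n := by omega
  set i0 : Fin n := ⟨0, hn0⟩ with hi0def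
  have hb1 : ‖b i0‖ = ‖v‖ := by rw [b.orthonormal.1 i0, hv]
  set f := Submodule.reflection (ℝ ∙ (b i0 - v))ᗮ with hfdef
  set e : OrthonormalBasis (Fin n) ℝ V := b.map f with hedef
  have he0 : e i0 = v := by
    rw [hedef, OrthonormalBasis.map_apply]
    exact Submodule.reflection_sub hb1
  have hev : ∀ a : Fin n, a ≠ i0 → ⟪e a, v⟫ = 0 := by
    intro a ha
    rw [← he0, b_inner e a i0, if_neg ha]
  have hve : ∀ a : Fin n, a ≠ i0 → ⟪v, e a⟫ = 0 := by
    intro a ha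
    rw [real_inner_comm]; exact hev a ha
  have hnn1 : (0:ℝ) < (n:ℝ) * ((n:ℝ) - 1) := by
    have h4 : (4:ℝ) ≤ (n:ℝ) := by exact_mod_cast hn
    nlinarith
  set c : ℝ := Real.sqrt ((n:ℝ) * ((n:ℝ) - 1)) with hcdef
  have hc : c * c = (n:ℝ) * ((n:ℝ) - 1) := Real.mul_self_sqrt hnn1.le
  have hcpos : 0 < c := Real.sqrt_pos.mpr hnn1
  set s : ℝ := Real.sqrt 2 with hsdef
  have hs : s * s = 2 := Real.mul_self_sqrt (by norm_num)
  have hspos : 0 < s := Real.sqrt_pos.mpr (by norm_num)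
  set φ : Fin n → (V →ₗ[ℝ] V →ₗ[ℝ] ℝ) := fun a =>
    if a = i0 then c⁻¹ • (gform + (-(n:ℝ)) • tform v v)
    else s⁻¹ • (tform (e a) v + tform v (e a)) with hφdef
  have hφi0 : φ i0 = c⁻¹ • (gform + (-(n:ℝ)) • tform v v) := by
    simp [hφdef]
  have hφa : ∀ a, a ≠ i0 → φ a = s⁻¹ • (tform (e a) v + tform v (e a)) := fun a ha => by
    simp only [hφdef]; exact if_neg ha
  have trg : ∑ i : Fin n, ⟪b i, b i⟫ = (n:ℝ) := by
    simp [b_inner b]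
  have hts : ∀ a, IsTracelessSymForm b (φ a) := by
    intro a
    by_cases ha : a = i0
    · rw [ha, hφi0]
      constructor
      · intro x y
        simp only [LinearMap.smul_apply, LinearMap.add_apply,
          smul_eq_mul, gform_apply, tform_apply]
        rw [real_inner_comm x y]; ring
      · simp only [LinearMap.smul_apply, LinearMap.add_apply,
          smul_eq_mul, gform_apply, tform_apply]
        rw [← Finset.mul_sum, Finset.sum_add_distrib, ← Finset.mul_sum,
          parseval b v v, hvv, trg]
        ring
    · rw [hφa a ha]
      constructor
      · intro x y
        simp only [LinearMap.smul_apply, LinearMap.add_apply,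
          smul_eq_mul, tform_apply]
        ring
      · simp only [LinearMap.smul_apply, LinearMap.add_apply,
          smul_eq_mul, tform_apply]
        rw [← Finset.mul_sum, Finset.sum_add_distrib, parseval b (e a) v,
          parseval b v (e a), hev a ha, hve a ha]
        ring
  have horth : ∀ a a', formInner b (φ a) (φ a') = if a = a' then 1 else 0 := by
    intro a a'
    by_cases ha : a = i0 <;> by_cases ha' : a' = i0
    · rw [if_pos (by rw [ha, ha']), ha, ha', hφi0]
      simp only [fi_smul_left, fi_smul_right,
        fi_add_left, fi_add_right, fi_gg, fi_gt, fi_tg, fi_tt, hvv]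
      have hcne : c ≠ 0 := ne_of_gt hcpos
      field_simp
      nlinarith [hc]
    · rw [if_neg (by rw [ha]; exact fun h => ha' h.symm), ha, hφi0, hφa a' ha']
      simp only [fi_smul_left, fi_smul_right,
        fi_add_left, fi_add_right, fi_gg, fi_gt, fi_tg, fi_tt, hvv,
        hev a' ha', hve a' ha']
      ring
    · rw [if_neg (fun h => ha (h.trans ha')), ha', hφi0, hφa a ha]
      simp only [fi_smul_left, fi_smul_right,
        fi_add_left, fi_add_right, fi_gg, fi_gt, fi_tg, fi_tt, hvv,
        hev a ha, hve a ha]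
      ring
    · rw [hφa a ha, hφa a' ha']
      have heaa : ⟪e a, e a'⟫ = if a = a' then (1:ℝ) else 0 := b_inner e a a'
      by_cases haa : a = a'
      · rw [if_pos haa]
        simp only [fi_smul_left, fi_smul_right, fi_add_left, fi_add_right,
          fi_tt, hvv, hev a ha, hve a ha, hev a' ha', hve a' ha', heaa, if_pos haa]
        have hsne : s ≠ 0 := ne_of_gt hspos
        field_simp
        nlinarith [hs]
      · rw [if_neg haa]
        simp only [fi_smul_left, fi_smul_right, fi_add_left, fi_add_right,
          fi_tt, hvv, hev a ha, hve a ha, hev a' ha', hve a' ha', heaa, if_neg haa]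
        ring
  have hsum := hnn φ hts horth
  -- value of the diagonal form
  have hskgg : secondKind b R gform gform = -(scalarCurv b R) := by
    rw [sk_gg b R, scalarCurv, ← Finset.sum_neg_distrib]
    refine Finset.sum_congr rfl fun i _ => ?_
    rw [← Finset.sum_neg_distrib]
    refine Finset.sum_congr rfl fun j _ => ?_
    rw [asym2 hR (b i) (b j) (b j) (b i)]
  have hskgt : secondKind b R gform (tform v v) = -(ricci b R v v) := by
    rw [sk_gt b R v v, ricci, ← Finset.sum_neg_distrib]
    refine Finset.sum_congr rfl fun i _ => ?_
    rw [asym2 hR (b i) v v (b i), flip2 hR (b i) v (b i) v]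
  have hsktg : secondKind b R (tform v v) gform = -(ricci b R v v) := by
    rw [sk_tg b R v v, ricci, ← Finset.sum_neg_distrib]
    refine Finset.sum_congr rfl fun j _ => ?_
    rw [asym2 hR v (b j) (b j) v]
  have hski0 : secondKind b R (φ i0) (φ i0)
      = c⁻¹ * (c⁻¹ * (2 * (n:ℝ) * ricci b R v v - scalarCurv b R)) := by
    rw [hφi0]
    simp only [sk_smul_left, sk_smul_right, sk_add_left,
      sk_add_right, hskgg, hskgt, hsktg, sk_tt, zero_xx hR]
    ring
  have hska : ∀ a : Fin n, a ≠ i0 →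
      secondKind b R (φ a) (φ a) = R v (e a) v (e a) := by
    intro a ha
    rw [hφa a ha]
    simp only [sk_smul_left, sk_smul_right, sk_add_left,
      sk_add_right, sk_tt, zero_xx hR, zero_zz hR]
    rw [flip2 hR (e a) v (e a) v]
    have hsne : s ≠ 0 := ne_of_gt hspos
    field_simp
    linear_combination (-(R v (e a) v (e a))) * hs
  have hrv : ∑ a : Fin n, R v (e a) v (e a) = ricci b R v v := by
    calc ∑ a : Fin n, R v (e a) v (e a) = ∑ a, bform R v (e a) (e a) := by
          exact Finset.sum_congr rfl fun a _ => (bform_apply R v (e a) (e a)).symm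
      _ = ∑ i, bform R v (b i) (b i) := (trace_inv b e (bform R v)).symm
      _ = ricci b R v v := Finset.sum_congr rfl fun i _ => bform_apply R v (b i) (b i)
  have hsplit : ∑ a, secondKind b R (φ a) (φ a)
      = secondKind b R (φ i0) (φ i0)
        + ∑ a ∈ Finset.univ.erase i0, secondKind b R (φ a) (φ a) :=
    (Finset.add_sum_erase _ _ (Finset.mem_univ i0)).symm
  have herase : ∑ a ∈ Finset.univ.erase i0, secondKind b R (φ a) (φ a)
      = ricci b R v v := by
    have h1 : ∑ a ∈ Finset.univ.erase i0, secondKind b R (φ a) (φ a)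
        = ∑ a ∈ Finset.univ.erase i0, R v (e a) v (e a) :=
      Finset.sum_congr rfl fun a haa => hska a (Finset.mem_erase.mp haa).1
    have h2 : ∑ a : Fin n, R v (e a) v (e a)
        = R v (e i0) v (e i0) + ∑ a ∈ Finset.univ.erase i0, R v (e a) v (e a) :=
      (Finset.add_sum_erase _ _ (Finset.mem_univ i0)).symm
    rw [he0] at h2
    rw [h1]
    have h3 : R v v v v = 0 := zero_xx hR v v v
    rw [hrv] at h2
    linarith
  rw [hsplit, hski0, herase] at hsum
  have hinv : ((n:ℝ) * ((n:ℝ) - 1)) * (c⁻¹ * c⁻¹) = 1 := by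
    rw [← hc]; field_simp
  have h2 : 0 ≤ (2 * (n:ℝ) * ricci b R v v - scalarCurv b R)
      + (n:ℝ) * ((n:ℝ) - 1) * ricci b R v v := by
    have hmul := mul_le_mul_of_nonneg_left hsum hnn1.le
    calc (0:ℝ) = (n:ℝ) * ((n:ℝ) - 1) * 0 := by ring
      _ ≤ (n:ℝ) * ((n:ℝ) - 1)
          * (c⁻¹ * (c⁻¹ * (2 * (n:ℝ) * ricci b R v v - scalarCurv b R))
            + ricci b R v v) := hmul
      _ = (((n:ℝ) * ((n:ℝ) - 1)) * (c⁻¹ * c⁻¹))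
            * (2 * (n:ℝ) * ricci b R v v - scalarCurv b R)
          + (n:ℝ) * ((n:ℝ) - 1) * ricci b R v v := by ring
      _ = (2 * (n:ℝ) * ricci b R v v - scalarCurv b R)
          + (n:ℝ) * ((n:ℝ) - 1) * ricci b R v v := by rw [hinv]; ring
  nlinarith [h2]
theorem stmt_8 {n : ℕ} (hn : 4 ≤ n)
    (b : OrthonormalBasis (Fin n) ℝ V)
    (R : V →ₗ[ℝ] V →ₗ[ℝ] V →ₗ[ℝ] V →ₗ[ℝ] ℝ)
    (hR : IsAlgCurvatureTensor R)
    (hnn : kNonnegSecondKind b R n) :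
    0 ≤ scalarCurv b R ∧
      ∀ v : V, ‖v‖ = 1 →
        scalarCurv b R / ((n : ℝ) * ((n : ℝ) + 1)) ≤ ricci b R v v := by
  have key' : ∀ v : V, ‖v‖ = 1 →
      scalarCurv b R ≤ (n:ℝ) * ((n:ℝ) + 1) * ricci b R v v :=
    fun v hv => key hn b R hR hnn v hv
  have h4 : (4:ℝ) ≤ (n:ℝ) := by exact_mod_cast hn
  have hpos : (0:ℝ) < (n:ℝ) * ((n:ℝ) + 1) := by nlinarith
  have hsum : ∑ i : Fin n, ricci b R (b i) (b i) = scalarCurv b R := rfl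
  have hS : 0 ≤ scalarCurv b R := by
    have h := Finset.sum_le_sum
      (fun i (_ : i ∈ (Finset.univ : Finset (Fin n))) => key' (b i) (b.orthonormal.1 i))
    rw [Finset.sum_const, ← Finset.mul_sum, hsum] at h
    simp only [Finset.card_univ, Fintype.card_fin, nsmul_eq_mul] at h
    have h5 : 0 ≤ (n:ℝ) * (n:ℝ) * scalarCurv b R := by nlinarith [h]
    have hn2 : (0:ℝ) < (n:ℝ) * (n:ℝ) := by nlinarith
    nlinarith [h5, hn2]
  refine ⟨hS, fun v hv => ?_⟩
  rw [div_le_iff₀ hpos]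
  have := key' v hv
  linarith [this]
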